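/- Let p2, m1, m2 > 0 and set λ = (p2 + m1² + m2²)² − 4·m1²·m2² (which is positive). Then ∫₀¹ dx / (x(1−x)·p2 + x·m2² + (1−x)·m1²) = (1/√λ) · log( (p2 + m1² + m2² + √λ) / (p2 + m1² + m2² − √λ) ). -/

import Mathlib

lemma bubble_aux (p2 m1 m2 s : ℝ)
    (hp : 0 < p2) (h1 : 0 < m1) (h2 : 0 < m2) (hs_pos : 0 < s)
    (hs2 : s^2 = (p2 + m1^2 + m2^2)^2 - 4*m1^2*m2^2) :
    ∫ x in (0:ℝ)..1, 1 / (x*(1-x)*p2 + x*m2^2 + (1-x)*m1^2)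
      = (1 / s) * Real.log ((p2 + m1^2 + m2^2 + s) / (p2 + m1^2 + m2^2 - s)) := by
  have hsb : p2 + m2^2 - m1^2 < s := by nlinarith [mul_pos hp (mul_pos h1 h1)]
  have hsu : p2 + m1^2 - m2^2 < s := by nlinarith [mul_pos hp (mul_pos h2 h2)]
  have h2p : (0:ℝ) < 2*p2 := by linarith
  obtain ⟨r1, hr1def⟩ : ∃ r : ℝ, r = (p2 + m2^2 - m1^2 + s)/(2*p2) := ⟨_, rfl⟩
  obtain ⟨r2, hr2def⟩ : ∃ r : ℝ, r = (p2 + m2^2 - m1^2 - s)/(2*p2) := ⟨_, rfl⟩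
  have hr2neg : r2 < 0 := hr2def ▸ div_neg_of_neg_of_pos (by linarith) h2p
  have hr1gt : 1 < r1 := by
    rw [hr1def, lt_div_iff₀ h2p]; nlinarith
  have hΔ : ∀ x : ℝ, x*(1-x)*p2 + x*m2^2 + (1-x)*m1^2 = p2*((r1-x)*(x-r2)) := by
    intro x
    rw [hr1def, hr2def]
    field_simp
    linear_combination (-1) * hs2
  have hr12 : p2 * (r1 - r2) = s := by rw [hr1def, hr2def]; field_simp; ring
  have hderiv : ∀ x ∈ Set.uIcc (0:ℝ) 1,
      HasDerivAt (fun y => (Real.log (y - r2) - Real.log (r1 - y))/s)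
        (1 / (x*(1-x)*p2 + x*m2^2 + (1-x)*m1^2)) x := by
    intro x hx
    rw [Set.uIcc_of_le zero_le_one] at hx
    have hxr2 : 0 < x - r2 := by linarith [hx.1]
    have hxr1 : 0 < r1 - x := by linarith [hx.2]
    have d1 : HasDerivAt (fun y : ℝ => Real.log (y - r2)) (1/(x - r2)) x := by
      simpa using ((hasDerivAt_id x).sub_const r2).log hxr2.ne'
    have d2 : HasDerivAt (fun y : ℝ => Real.log (r1 - y)) ((-1)/(r1 - x)) x := by
      simpa using ((hasDerivAt_id x).const_sub r1).log hxr1.ne'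
    have d3 := (d1.sub d2).div_const s
    refine d3.congr_deriv ?_; symm
    rw [hΔ x]
    field_simp
    linear_combination (-1) * hr12
  have hΔpos : ∀ x ∈ Set.uIcc (0:ℝ) 1, 0 < x*(1-x)*p2 + x*m2^2 + (1-x)*m1^2 := by
    intro x hx
    rw [Set.uIcc_of_le zero_le_one] at hx
    rw [hΔ x]
    have h1' : 0 < r1 - x := by linarith [hx.2]
    have h2' : 0 < x - r2 := by linarith [hx.1]
    positivity
  have hc : Continuous fun x : ℝ => x*(1-x)*p2 + x*m2^2 + (1-x)*m1^2 := by fun_prop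
  have hint : IntervalIntegrable (fun x => 1 / (x*(1-x)*p2 + x*m2^2 + (1-x)*m1^2))
      MeasureTheory.volume 0 1 :=
    (ContinuousOn.div continuousOn_const hc.continuousOn
      (fun x hx => (hΔpos x hx).ne')).intervalIntegrable
  rw [intervalIntegral.integral_eq_sub_of_hasDerivAt hderiv hint]
  have h1r2 : 0 < 1 - r2 := by linarith
  have hr11 : 0 < r1 - 1 := by linarith
  have hnr2 : 0 < -r2 := by linarith
  have hr1pos : 0 < r1 := by linarith
  have hAs : 0 < p2 + m1^2 + m2^2 - s := by
    nlinarith [mul_pos (mul_pos h1 h1) (mul_pos h2 h2)]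
  have hAps : 0 < p2 + m1^2 + m2^2 + s := by nlinarith
  have hq : ((1-r2)*r1) / ((r1-1)*(-r2)) = (p2 + m1^2 + m2^2 + s)/(p2 + m1^2 + m2^2 - s) := by
    rw [div_eq_div_iff (by positivity) hAs.ne', hr1def, hr2def]
    field_simp
    linear_combination (-2*s) * hs2
  have hL : Real.log (1-r2) - Real.log (r1-1) - (Real.log (-r2) - Real.log r1)
      = Real.log ((p2 + m1^2 + m2^2 + s)/(p2 + m1^2 + m2^2 - s)) := by
    rw [← hq,
      Real.log_div (mul_ne_zero h1r2.ne' hr1pos.ne') (mul_ne_zero hr11.ne' hnr2.ne'),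
      Real.log_mul h1r2.ne' hr1pos.ne', Real.log_mul hr11.ne' hnr2.ne']
    ring
  simp only [zero_sub, sub_zero]
  linear_combination (1/s) * hL

theorem bubble_integral_two_dimensions (p2 m1 m2 : ℝ)
    (hp : 0 < p2) (h1 : 0 < m1) (h2 : 0 < m2) :
    ∫ x in (0:ℝ)..1, 1 / (x*(1-x)*p2 + x*m2^2 + (1-x)*m1^2)
      = (1 / Real.sqrt ((p2 + m1^2 + m2^2)^2 - 4*m1^2*m2^2)) *
        Real.log ((p2 + m1^2 + m2^2 + Real.sqrt ((p2 + m1^2 + m2^2)^2 - 4*m1^2*m2^2)) /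
                  (p2 + m1^2 + m2^2 - Real.sqrt ((p2 + m1^2 + m2^2)^2 - 4*m1^2*m2^2))) := by
  have hlam_pos : 0 < (p2 + m1^2 + m2^2)^2 - 4*m1^2*m2^2 := by
    nlinarith [mul_pos (show (0:ℝ) < p2 + (m1-m2)^2 by positivity)
      (show (0:ℝ) < p2 + (m1+m2)^2 by positivity)]
  exact bubble_aux p2 m1 m2 _ hp h1 h2 (Real.sqrt_pos.mpr hlam_pos)
    (Real.sq_sqrt hlam_pos.le)
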